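/- arXiv:2109.15007 — 2 statements merged into one kernel-verified Lean document; each statement's English description precedes it below -/
import Mathlib

section
/- If a, b > 0 with a + b ≥ 1 and f : [0,1) → ℝ satisfies 1/(1-f(s)) = a/(1-s) + b, then f(s) = (a+b-1)/(a+b) + (1/(a+b)) · (a/(a+b))s / (1 - (b/(a+b))s), i.e., the LF(a,b) distribution is the mixture ((a+b-1)/(a+b))·δ₀ + (1/(a+b))·Geom₊(a/(a+b)). -/
open Set

theorem stmt1 (a b : ℝ) (ha : 0 < a) (hb : 0 < b) (hab : 1 ≤ a + b)
    (f : ℝ → ℝ) (hf : ∀ s ∈ Ico (0:ℝ) 1, 1 / (1 - f s) = a / (1 - s) + b) :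
    ∀ s ∈ Ico (0:ℝ) 1,
      f s = (a + b - 1) / (a + b)
        + (1 / (a + b)) * ((a / (a + b)) * s / (1 - (b / (a + b)) * s)) := by
  intro s hs
  obtain ⟨hs0, hs1⟩ := hs
  have h1 : (0:ℝ) < 1 - s := by linarith
  have hab0 : (0:ℝ) < a + b := by linarith
  have hd : 0 < a / (1 - s) + b := by positivity
  have key := hf s ⟨hs0, hs1⟩
  have hne : 1 - f s ≠ 0 := by
    intro h
    rw [h] at key
    simp at key
    linarith
  have hfs : f s = 1 - 1 / (a / (1 - s) + b) := by
    field_simp at key ⊢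
    linarith [key]
  have hden : 1 - (b / (a + b)) * s ≠ 0 := by
    have : (b / (a + b)) * s < 1 := by
      have hb1 : b / (a + b) < 1 := by
        rw [div_lt_one hab0]; linarith
      have : (b / (a + b)) * s ≤ b / (a + b) * 1 := by
        apply mul_le_mul_of_nonneg_left (le_of_lt hs1) (by positivity)
      nlinarith
    linarith
  have hA : a + b * (1 - s) ≠ 0 := by positivity
  have hfs2 : f s = 1 - (1 - s) / (a + b * (1 - s)) := by
    rw [hfs]; congr 1
    rw [div_eq_div_iff (by positivity) (by positivity)]
    field_simp
  have hC : (0:ℝ) < a + b - b * s := by nlinarith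
  have hrw : 1 - b / (a + b) * s = (a + b - b * s) / (a + b) := by
    field_simp
  rw [hfs2, hrw, div_div_eq_mul_div]
  field_simp [show a + b - s * b ≠ 0 by nlinarith]
  ring
end

section
/- Let f_{1:n}(s) = 1 - 1/(Πₙ/(1-s) + Rₙ) with Πₙ → 0 and Rₙ ↑ R_∞ ∈ [1,∞). Then for every u > 0, f_{1:n}(e^{-uΠₙ}) → 1 - 1/R_∞ + (1/R_∞)·(R_∞⁻¹/(R_∞⁻¹ + u)) as n → ∞, i.e., the quenched Laplace transform of W_∞ = lim ΠₙZₙ equals that of (1 - 1/R_∞)δ₀ + (1/R_∞)Exp(1/R_∞). -/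
open Filter

theorem stmt16 (P R : ℕ → ℝ) (hP : ∀ n, 0 < P n) (hR : ∀ n, 0 < R n)
    (R' : ℝ) (hR' : 1 ≤ R')
    (hPlim : Tendsto P atTop (nhds 0)) (hRlim : Tendsto R atTop (nhds R'))
    (u : ℝ) (hu : 0 < u) :
    Tendsto (fun n => 1 - 1 / (P n / (1 - Real.exp (-(u * P n))) + R n)) atTop
      (nhds (1 - 1 / R' + (1 / R') * ((1 / R') / (1 / R' + u)))) := by
  have hR0 : (0:ℝ) < R' := lt_of_lt_of_le one_pos hR'
  -- derivative fact
  have hderiv : HasDerivAt (fun x : ℝ => 1 - Real.exp (-(u * x))) u 0 := by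
    have h1 : HasDerivAt (fun x : ℝ => -(u * x)) (-u) 0 := by
      have h0 := ((hasDerivAt_id (0:ℝ)).const_mul u).neg
      simp only [mul_one] at h0
      exact h0
    have h2 := (Real.hasDerivAt_exp (-(u * 0))).comp 0 h1
    have h3 : HasDerivAt (fun x : ℝ => Real.exp (-(u * x))) (-u) 0 := by
      simp only [mul_zero, neg_zero, Real.exp_zero, one_mul] at h2
      exact h2
    simpa using (h3.const_sub 1)
  have hslope : Tendsto (fun x : ℝ => (1 - Real.exp (-(u * x))) / x) (nhdsWithin 0 {(0:ℝ)}ᶜ)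
      (nhds u) := by
    have := hasDerivAt_iff_tendsto_slope.mp hderiv
    refine this.congr' ?_
    filter_upwards [self_mem_nhdsWithin] with x hx
    simp [slope_def_field, div_eq_mul_inv, mul_comm]
  have hPmem : Tendsto P atTop (nhdsWithin 0 {(0:ℝ)}ᶜ) := by
    refine tendsto_nhdsWithin_of_tendsto_nhds_of_eventually_within _ hPlim ?_
    filter_upwards with n
    exact (hP n).ne'
  have hquot : Tendsto (fun n => (1 - Real.exp (-(u * P n))) / P n) atTop (nhds u) :=
    hslope.comp hPmem
  have hg : Tendsto (fun n => P n / (1 - Real.exp (-(u * P n)))) atTop (nhds (1 / u)) := by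
    have := hquot.inv₀ hu.ne'
    simpa [one_div, inv_div] using this
  have hden : Tendsto (fun n => P n / (1 - Real.exp (-(u * P n))) + R n) atTop
      (nhds (1 / u + R')) := hg.add hRlim
  have hdne : (1 / u + R') ≠ 0 := by positivity
  have hmain : Tendsto (fun n => 1 - 1 / (P n / (1 - Real.exp (-(u * P n))) + R n)) atTop
      (nhds (1 - 1 / (1 / u + R'))) := (tendsto_const_nhds.div hden hdne).const_sub 1
  have heq : 1 - 1 / (1 / u + R') = 1 - 1 / R' + (1 / R') * ((1 / R') / (1 / R' + u)) := by
    have h1 : (1 / R' + u) ≠ 0 := by positivity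
    field_simp
    ring
  rw [heq] at hmain
  exact hmain
end
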